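/- In the linear Anderson mixing setup, let k ≥ 1 and suppose rank(R_k) = k. Then the projected Anderson mixing iterate coincides with the GMRES iterate: x̄_k = x_k^G, i.e., x̄_k is the unique minimizer of x ↦ ‖b − Ax‖₂ over the affine subspace x₀ + 𝒦_k(A, r(x₀)). -/

import Mathlib

open Matrix

/-- The Euclidean (ℓ₂) norm of a vector in `ℝ^n`. -/
noncomputable def norm2 {n : ℕ} (v : Fin n → ℝ) : ℝ := Real.sqrt (∑ i, v i ^ 2)

/-- The residual `r(x) = b − Ax`. -/
def resid {d : ℕ} (A : Matrix (Fin d) (Fin d) ℝ) (b : Fin d → ℝ) (x : Fin d → ℝ) :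
    Fin d → ℝ := b - A.mulVec x

/-- The matrix whose columns are the first `j` forward differences of the sequence `v`. -/
def diffMat {d : ℕ} (v : ℕ → Fin d → ℝ) (j : ℕ) : Matrix (Fin d) (Fin j) ℝ :=
  Matrix.of fun i (l : Fin j) => v ((l : ℕ) + 1) i - v (l : ℕ) i

/-- The `k`-th Krylov subspace `𝒦_k(A, v) = span{v, Av, …, A^{k−1}v}`. -/
def krylov {d : ℕ} (A : Matrix (Fin d) (Fin d) ℝ) (v : Fin d → ℝ) (k : ℕ) :
    Submodule ℝ (Fin d → ℝ) :=
  Submodule.span ℝ {w | ∃ i < k, w = (A ^ i).mulVec v}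

/-! ### Auxiliary lemmas on `norm2` and dot products -/

lemma norm2_eq_sqrt_dp {n : ℕ} (v : Fin n → ℝ) : norm2 v = Real.sqrt (v ⬝ᵥ v) := by
  simp [norm2, dotProduct, sq]

lemma dp_self_nonneg {n : ℕ} (v : Fin n → ℝ) : 0 ≤ v ⬝ᵥ v :=
  Finset.sum_nonneg fun i _ => mul_self_nonneg _

lemma norm2_le_norm2 {n : ℕ} {u w : Fin n → ℝ} (h : u ⬝ᵥ u ≤ w ⬝ᵥ w) : norm2 u ≤ norm2 w := by
  rw [norm2_eq_sqrt_dp, norm2_eq_sqrt_dp]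
  exact Real.sqrt_le_sqrt h

lemma dp_le_of_norm2_le {n : ℕ} {u w : Fin n → ℝ} (h : norm2 u ≤ norm2 w) : u ⬝ᵥ u ≤ w ⬝ᵥ w := by
  rw [norm2_eq_sqrt_dp, norm2_eq_sqrt_dp, Real.sqrt_le_sqrt_iff (dp_self_nonneg w)] at h
  exact h

lemma dp_sub_sub {n : ℕ} (a b : Fin n → ℝ) :
    (a - b) ⬝ᵥ (a - b) = a ⬝ᵥ a - 2 * (a ⬝ᵥ b) + b ⬝ᵥ b := by
  rw [sub_dotProduct, dotProduct_sub, dotProduct_sub, dotProduct_comm b a]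
  ring

/-- Minimality over a subspace implies orthogonality of the residual. -/
lemma orth_of_min {n : ℕ} (K : Submodule ℝ (Fin n → ℝ)) (u v : Fin n → ℝ) (hv : v ∈ K)
    (hmin : ∀ w ∈ K, norm2 (u - v) ≤ norm2 (u - w)) :
    ∀ w ∈ K, (u - v) ⬝ᵥ w = 0 := by
  intro w hw
  by_contra hc
  have hww : 0 < w ⬝ᵥ w := by
    rcases lt_or_eq_of_le (dp_self_nonneg w) with h | h
    · exact h
    · exact absurd (by simp [dotProduct_self_eq_zero.mp h.symm]) hc
  set c : ℝ := (u - v) ⬝ᵥ w with hc'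
  set t : ℝ := c / (w ⬝ᵥ w) with ht
  have hw' : v + t • w ∈ K := K.add_mem hv (K.smul_mem t hw)
  have hle := dp_le_of_norm2_le (hmin _ hw')
  have hsplit : u - (v + t • w) = (u - v) - t • w := by abel
  rw [hsplit, dp_sub_sub (u - v) (t • w)] at hle
  have h1 : (u - v) ⬝ᵥ (t • w) = t * c := by
    rw [dotProduct_smul, smul_eq_mul, ← hc']
  have h2 : (t • w) ⬝ᵥ (t • w) = t * (t * (w ⬝ᵥ w)) := by
    rw [smul_dotProduct, dotProduct_smul, smul_eq_mul, smul_eq_mul]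
  rw [h1, h2] at hle
  have ht2 : t * (w ⬝ᵥ w) = c := by
    rw [ht]; field_simp
  rw [ht2] at hle
  have hcsq : 0 < c ^ 2 := lt_of_le_of_ne (sq_nonneg c) (Ne.symm (pow_ne_zero 2 hc))
  have htc : 0 < t * c := by
    rw [ht, div_mul_eq_mul_div]
    exact div_pos (by nlinarith) hww
  nlinarith

/-- Orthogonality of the residual implies minimality over the subspace. -/
lemma min_of_orth {n : ℕ} (K : Submodule ℝ (Fin n → ℝ)) (u v : Fin n → ℝ) (hv : v ∈ K)
    (horth : ∀ w ∈ K, (u - v) ⬝ᵥ w = 0) :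
    ∀ w ∈ K, norm2 (u - v) ≤ norm2 (u - w) := by
  intro w hw
  apply norm2_le_norm2
  have h1 : (u - v) ⬝ᵥ (w - v) = 0 := horth _ (K.sub_mem hw hv)
  have hsplit : u - w = (u - v) - (w - v) := by abel
  rw [hsplit, dp_sub_sub (u - v) (w - v), h1]
  nlinarith [dp_self_nonneg (w - v)]

/-- Orthogonality of the residual implies the minimizer is unique. -/
lemma eq_of_min_of_orth {n : ℕ} (K : Submodule ℝ (Fin n → ℝ)) (u v : Fin n → ℝ) (hv : v ∈ K)
    (horth : ∀ w ∈ K, (u - v) ⬝ᵥ w = 0) (w : Fin n → ℝ) (hw : w ∈ K)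
    (hle : norm2 (u - w) ≤ norm2 (u - v)) : w = v := by
  have h1 : (u - v) ⬝ᵥ (w - v) = 0 := horth _ (K.sub_mem hw hv)
  have hle' := dp_le_of_norm2_le hle
  have hsplit : u - w = (u - v) - (w - v) := by abel
  rw [hsplit, dp_sub_sub (u - v) (w - v), h1] at hle'
  have h2 : (w - v) ⬝ᵥ (w - v) = 0 := by nlinarith [dp_self_nonneg (w - v)]
  exact sub_eq_zero.mp (dotProduct_self_eq_zero.mp h2)

/-! ### Auxiliary lemmas on Krylov subspaces and the AM matrices -/

lemma krylov_mono {d : ℕ} (A : Matrix (Fin d) (Fin d) ℝ) (v : Fin d → ℝ) {j k : ℕ}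
    (h : j ≤ k) : krylov A v j ≤ krylov A v k :=
  Submodule.span_mono fun _ ⟨i, hi, hw⟩ => ⟨i, lt_of_lt_of_le hi h, hw⟩

lemma self_mem_krylov {d : ℕ} (A : Matrix (Fin d) (Fin d) ℝ) (v : Fin d → ℝ) {k : ℕ}
    (hk : 1 ≤ k) : v ∈ krylov A v k :=
  Submodule.subset_span ⟨0, hk, by simp⟩

lemma mulVec_mem_krylov {d : ℕ} (A : Matrix (Fin d) (Fin d) ℝ) (v : Fin d → ℝ) {j : ℕ}
    {w : Fin d → ℝ} (hw : w ∈ krylov A v j) : A.mulVec w ∈ krylov A v (j + 1) := by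
  induction hw using Submodule.span_induction with
  | mem z hz =>
      obtain ⟨i, hi, rfl⟩ := hz
      exact Submodule.subset_span ⟨i + 1, by omega, by rw [mulVec_mulVec, pow_succ']⟩
  | zero => simp
  | add y z _ _ hy hz => rw [mulVec_add]; exact Submodule.add_mem _ hy hz
  | smul a y _ hy => rw [mulVec_smul]; exact Submodule.smul_mem _ a hy

lemma finrank_krylov_le {d : ℕ} (A : Matrix (Fin d) (Fin d) ℝ) (v : Fin d → ℝ) (k : ℕ) :
    Module.finrank ℝ (krylov A v k) ≤ k := by
  have hset : {w | ∃ i < k, w = (A ^ i).mulVec v} =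
      Set.range (fun i : Fin k => (A ^ (i : ℕ)).mulVec v) := by
    ext w
    constructor
    · rintro ⟨i, hi, rfl⟩; exact ⟨⟨i, hi⟩, rfl⟩
    · rintro ⟨i, rfl⟩; exact ⟨i, i.2, rfl⟩
  rw [krylov, hset]
  calc Module.finrank ℝ (Submodule.span ℝ (Set.range fun i : Fin k => (A ^ (i : ℕ)).mulVec v))
      ≤ (Set.range fun i : Fin k => (A ^ (i : ℕ)).mulVec v).toFinset.card :=
        finrank_span_le_card _
    _ ≤ k := by
        rw [Set.toFinset_range]
        exact le_trans Finset.card_image_le (by simp)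

lemma mulVec_diffMat {d j : ℕ} (v : ℕ → Fin d → ℝ) (G : Fin j → ℝ) :
    (diffMat v j).mulVec G = ∑ l : Fin j, G l • (v ((l : ℕ) + 1) - v (l : ℕ)) := by
  funext i
  simp [diffMat, Matrix.mulVec, dotProduct, Finset.sum_apply, mul_comm]

lemma resid_eq {d : ℕ} (A : Matrix (Fin d) (Fin d) ℝ) (b y z : Fin d → ℝ) :
    resid A b y = resid A b z - A.mulVec (y - z) := by
  simp [resid, mulVec_sub]

lemma diffMat_resid {d : ℕ} (A : Matrix (Fin d) (Fin d) ℝ) (b : Fin d → ℝ) (x : ℕ → Fin d → ℝ)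
    (j : ℕ) : diffMat (fun i => resid A b (x i)) j = -(A * diffMat x j) := by
  ext i l
  have h' := congrFun (resid_eq A b (x ((l : ℕ) + 1)) (x (l : ℕ))) i
  simp only [diffMat, Matrix.of_apply, Matrix.neg_apply, Matrix.mul_apply]
  simp only [resid, Pi.sub_apply] at h' ⊢
  rw [show (b i - A.mulVec (x (↑l + 1)) i)
      = (b i - A.mulVec (x ↑l) i - A.mulVec (x (↑l + 1) - x ↑l) i) from h']
  simp [Matrix.mulVec, dotProduct, Finset.mul_sum, Finset.sum_sub_distrib, mul_sub]

/-! ### The main theorem -/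

theorem anderson_mixing_eq_gmres (d : ℕ) (hd : 1 ≤ d)
    (A : Matrix (Fin d) (Fin d) ℝ) (hA : A.PosDef)
    (b x0 : Fin d → ℝ)
    (x : ℕ → Fin d → ℝ) (Γ : (j : ℕ) → Fin j → ℝ)
    (hx0 : x 0 = x0)
    (hx1 : x 1 = x 0 + resid A b (x 0))
    (hΓ : ∀ j : ℕ, ∀ G : Fin j → ℝ,
      norm2 (resid A b (x j) - (diffMat (fun i => resid A b (x i)) j).mulVec (Γ j)) ≤
        norm2 (resid A b (x j) - (diffMat (fun i => resid A b (x i)) j).mulVec G))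
    (hrec : ∀ j : ℕ, 1 ≤ j →
      x (j + 1) = x j + resid A b (x j)
        - (diffMat x j + diffMat (fun i => resid A b (x i)) j).mulVec (Γ j))
    (k : ℕ) (hk : 1 ≤ k)
    (hrank : (diffMat (fun i => resid A b (x i)) k).rank = k) :
    (x k - (diffMat x k).mulVec (Γ k)) - x0 ∈ krylov A (resid A b x0) k ∧
    (∀ y : Fin d → ℝ, y - x0 ∈ krylov A (resid A b x0) k →
      norm2 (resid A b (x k - (diffMat x k).mulVec (Γ k))) ≤ norm2 (resid A b y)) ∧
    (∀ y : Fin d → ℝ, y - x0 ∈ krylov A (resid A b x0) k →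
      (∀ z : Fin d → ℝ, z - x0 ∈ krylov A (resid A b x0) k →
        norm2 (resid A b y) ≤ norm2 (resid A b z)) →
      y = x k - (diffMat x k).mulVec (Γ k)) := by
  set r0 : Fin d → ℝ := resid A b x0 with hr0def
  -- membership of the AM iterates in the Krylov subspaces
  have hxmem : ∀ j, x j - x0 ∈ krylov A r0 j := by
    intro j
    induction j using Nat.strong_induction_on with
    | _ j ih =>
      match j with
      | 0 => rw [hx0]; simp
      | 1 =>
          rw [hx1, hx0]
          simpa using self_mem_krylov A r0 (le_refl 1)
      | (j + 2) =>
          have hj1 : 1 ≤ j + 1 := by omega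
          rw [hrec (j + 1) hj1]
          have hXmem : ∀ G : Fin (j + 1) → ℝ,
              (diffMat x (j + 1)).mulVec G ∈ krylov A r0 (j + 1) := by
            intro G
            rw [mulVec_diffMat]
            apply Submodule.sum_mem
            intro l _
            apply Submodule.smul_mem
            have hsplit : x ((l : ℕ) + 1) - x (l : ℕ)
                = (x ((l : ℕ) + 1) - x0) - (x (l : ℕ) - x0) := by abel
            rw [hsplit]
            exact Submodule.sub_mem _
              (krylov_mono A r0 (by omega) (ih _ (by omega)))
              (krylov_mono A r0 (by omega) (ih _ (by omega)))
          have hxj : x (j + 1) - x0 ∈ krylov A r0 (j + 2) :=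
            krylov_mono A r0 (by omega) (ih (j + 1) (by omega))
          have hres : resid A b (x (j + 1)) ∈ krylov A r0 (j + 2) := by
            rw [resid_eq A b (x (j + 1)) x0, ← hr0def]
            exact Submodule.sub_mem _ (self_mem_krylov A r0 (by omega))
              (mulVec_mem_krylov A r0 (ih (j + 1) (by omega)))
          have hXR : (diffMat x (j + 1)
                + diffMat (fun i => resid A b (x i)) (j + 1)).mulVec (Γ (j + 1))
              ∈ krylov A r0 (j + 2) := by
            rw [Matrix.add_mulVec]
            apply Submodule.add_mem
            · exact krylov_mono A r0 (by omega) (hXmem (Γ (j + 1)))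
            · rw [diffMat_resid, neg_mulVec, ← mulVec_mulVec]
              exact Submodule.neg_mem _ (mulVec_mem_krylov A r0 (hXmem (Γ (j + 1))))
          have : x (j + 1) + resid A b (x (j + 1))
              - (diffMat x (j + 1)
                + diffMat (fun i => resid A b (x i)) (j + 1)).mulVec (Γ (j + 1)) - x0
              = (x (j + 1) - x0) + resid A b (x (j + 1))
              - (diffMat x (j + 1)
                + diffMat (fun i => resid A b (x i)) (j + 1)).mulVec (Γ (j + 1)) := by abel
          rw [this]
          exact Submodule.sub_mem _ (Submodule.add_mem _ hxj hres) hXR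
  -- columns of X_k lie in the k-th Krylov subspace
  have hXk : ∀ G : Fin k → ℝ, (diffMat x k).mulVec G ∈ krylov A r0 k := by
    intro G
    rw [mulVec_diffMat]
    apply Submodule.sum_mem
    intro l _
    apply Submodule.smul_mem
    have hsplit : x ((l : ℕ) + 1) - x (l : ℕ)
        = (x ((l : ℕ) + 1) - x0) - (x (l : ℕ) - x0) := by abel
    rw [hsplit]
    exact Submodule.sub_mem _
      (krylov_mono A r0 (by omega) (hxmem _))
      (krylov_mono A r0 (by omega) (hxmem _))
  -- the projected iterate lies in the Krylov affine subspace
  have hmem1 : (x k - (diffMat x k).mulVec (Γ k)) - x0 ∈ krylov A r0 k := by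
    have : (x k - (diffMat x k).mulVec (Γ k)) - x0
        = (x k - x0) - (diffMat x k).mulVec (Γ k) := by abel
    rw [this]
    exact Submodule.sub_mem _ (hxmem k) (hXk (Γ k))
  -- the range of R_k equals A·𝒦_k
  set Rk : Matrix (Fin d) (Fin k) ℝ := diffMat (fun i => resid A b (x i)) k with hRkdef
  set S : Submodule ℝ (Fin d → ℝ) := LinearMap.range Rk.mulVecLin with hSdef
  set W : Submodule ℝ (Fin d → ℝ) := (krylov A r0 k).map A.mulVecLin with hWdef
  have hSW : S ≤ W := by
    rintro _ ⟨G, rfl⟩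
    refine ⟨-((diffMat x k).mulVec G), Submodule.neg_mem _ (hXk G), ?_⟩
    rw [Matrix.mulVecLin_apply, Matrix.mulVecLin_apply, hRkdef, diffMat_resid, neg_mulVec,
      ← mulVec_mulVec, Matrix.mulVec_neg]
  have hWle : Module.finrank ℝ W ≤ k :=
    le_trans (Submodule.finrank_map_le _ _) (finrank_krylov_le A r0 k)
  have hSrank : Module.finrank ℝ S = k := hrank
  have hSWeq : S = W := by
    apply Submodule.eq_of_le_of_finrank_le hSW
    rw [hSrank]; exact hWle
  -- set up the projection data
  set sbar : Fin d → ℝ := Rk.mulVec (Γ k) with hsbardef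
  set rk : Fin d → ℝ := resid A b (x k) with hrkdef
  set wbar : Fin d → ℝ := A.mulVec (x k - x0) + sbar with hwbardef
  have hkey : rk - sbar = r0 - wbar := by
    rw [hrkdef, resid_eq A b (x k) x0, ← hr0def, hwbardef]; abel
  have hsbarS : sbar ∈ S := ⟨Γ k, rfl⟩
  have hwbarW : wbar ∈ W := by
    apply Submodule.add_mem
    · exact ⟨x k - x0, hxmem k, rfl⟩
    · exact hSWeq ▸ hsbarS
  -- orthogonality from the AM least-squares condition
  have hminS : ∀ s ∈ S, norm2 (rk - sbar) ≤ norm2 (rk - s) := by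
    rintro _ ⟨G, rfl⟩
    exact hΓ k G
  have horthS : ∀ s ∈ S, (rk - sbar) ⬝ᵥ s = 0 := orth_of_min S rk sbar hsbarS hminS
  have horthW : ∀ w ∈ W, (r0 - wbar) ⬝ᵥ w = 0 := by
    intro w hw
    rw [← hkey]
    exact horthS w (hSWeq ▸ hw)
  -- the residual of the projected iterate
  have hresbar : resid A b (x k - (diffMat x k).mulVec (Γ k)) = r0 - wbar := by
    rw [← hkey, resid_eq A b _ (x k), ← hrkdef]
    have h1 : x k - (diffMat x k).mulVec (Γ k) - x k = -((diffMat x k).mulVec (Γ k)) := by abel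
    rw [h1, Matrix.mulVec_neg, sub_neg_eq_add, hsbardef, hRkdef, diffMat_resid, neg_mulVec,
      ← mulVec_mulVec, sub_neg_eq_add]
  refine ⟨hmem1, ?_, ?_⟩
  · intro y hy
    rw [hresbar, resid_eq A b y x0, ← hr0def]
    exact min_of_orth W r0 wbar hwbarW horthW _ ⟨y - x0, hy, rfl⟩
  · intro y hy hymin
    have hwW : A.mulVec (y - x0) ∈ W := ⟨y - x0, hy, rfl⟩
    have hle : norm2 (r0 - A.mulVec (y - x0)) ≤ norm2 (r0 - wbar) := by
      rw [← hresbar]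
      have := hymin _ hmem1
      rwa [resid_eq A b y x0, ← hr0def] at this
    have heq : A.mulVec (y - x0) = wbar :=
      eq_of_min_of_orth W r0 wbar hwbarW horthW _ hwW hle
    -- now conclude by injectivity of A
    have hwbar2 : wbar = A.mulVec ((x k - (diffMat x k).mulVec (Γ k)) - x0) := by
      have h2 := hresbar
      rw [resid_eq A b _ x0, ← hr0def] at h2
      exact (sub_right_injective h2).symm
    have hzero : A.mulVec (y - (x k - (diffMat x k).mulVec (Γ k))) = 0 := by
      have : y - (x k - (diffMat x k).mulVec (Γ k))
          = (y - x0) - ((x k - (diffMat x k).mulVec (Γ k)) - x0) := by abel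
      rw [this, mulVec_sub, heq, hwbar2, sub_self]
    have hinj : y - (x k - (diffMat x k).mulVec (Γ k)) = 0 := by
      by_contra h
      have h2 := hA.dotProduct_mulVec_pos h
      rw [hzero] at h2
      simp at h2
    exact sub_eq_zero.mp hinj
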